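/- For every integer m ≥ 2, m(m−1)(d_{m-1}(m)² − d_m(m) d_{m-2}(m)) = (m(4m²+6m−1)/(4(2m−1))) · m(m−1) · 2^{-2m} · C(2m,m)², and this quantity strictly exceeds m(m+1) · 2^{-2m} · C(2m,m)² = m(m+1) d_m(m)². -/

import Mathlib

noncomputable def d (m i : ℕ) : ℚ :=
  (2:ℚ)^(-(2*(m:ℤ))) * ∑ k ∈ Finset.Icc i m,
    (2:ℚ)^k * (Nat.choose (2*m-2*k) (m-k)) * (Nat.choose (m+k) k) * (Nat.choose k i)

theorem stmt13 (m : ℕ) (hm : 2 ≤ m) :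
    (m:ℚ)*((m:ℚ)-1) * ((d m (m-1))^2 - d m m * d m (m-2))
      = ((m:ℚ)*(4*(m:ℚ)^2+6*(m:ℚ)-1)/(4*(2*(m:ℚ)-1)))
        * ((m:ℚ)*((m:ℚ)-1)) * (2:ℚ)^(-(2*(m:ℤ))) * (Nat.choose (2*m) m : ℚ)^2
    ∧ (m:ℚ)*((m:ℚ)-1) * ((d m (m-1))^2 - d m m * d m (m-2))
        > (m:ℚ)*((m:ℚ)+1) * (2:ℚ)^(-(2*(m:ℤ))) * (Nat.choose (2*m) m : ℚ)^2
    ∧ (m:ℚ)*((m:ℚ)+1) * (2:ℚ)^(-(2*(m:ℤ))) * (Nat.choose (2*m) m : ℚ)^2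
        = (m:ℚ)*((m:ℚ)+1) * (d m m)^2 := by
  obtain ⟨n, rfl⟩ : ∃ n, m = n + 2 := ⟨m - 2, by omega⟩
  set a : ℚ := (Nat.choose (2*n+4) (n+2) : ℚ) with ha
  set b : ℚ := (Nat.choose (2*n+3) (n+1) : ℚ) with hb
  set e : ℚ := (Nat.choose (2*n+2) n : ℚ) with he
  have hq : (2:ℚ)^(-(2*((n+2:ℕ):ℤ))) = ((2:ℚ)^(2*n+4))⁻¹ := by
    rw [zpow_neg]
    congr 1
  have h1 : d (n+2) (n+2) = ((2:ℚ)^(2*n+4))⁻¹ * 2^(n+2) * a := by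
    rw [d, hq, Finset.Icc_self, Finset.sum_singleton]
    rw [show 2*(n+2)-2*(n+2) = 0 by omega, show (n+2)-(n+2) = 0 by omega,
      show (n+2)+(n+2) = 2*n+4 by ring]
    simp only [Nat.choose_self, Nat.choose_zero_right]
    push_cast
    ring
  have h2 : d (n+2) (n+1) = ((2:ℚ)^(2*n+4))⁻¹ * (2^(n+1) * 2 * b + 2^(n+2) * a * (n+2)) := by
    rw [d, hq, show (n+2) = (n+1)+1 by ring, Finset.sum_Icc_succ_top (by omega), Finset.Icc_self,
      Finset.sum_singleton]
    have c1 : Nat.choose (n+2) (n+1) = n+2 := by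
      have := Nat.choose_symm (show n+1 ≤ n+2 by omega)
      rw [show n+2-(n+1) = 1 by omega, Nat.choose_one_right] at this
      exact this.symm
    rw [show 2*(n+1+1)-2*(n+1) = 2 by omega, show (n+1+1)-(n+1) = 1 by omega,
      show 2*(n+1+1)-2*(n+1+1) = 0 by omega, show (n+1+1)-(n+1+1) = 0 by omega,
      show (n+1+1)+(n+1) = 2*n+3 by ring, show (n+1+1)+(n+1+1) = 2*n+4 by ring,
      show (n+1)+1 = n+2 by ring, c1]
    simp only [Nat.choose_self, Nat.choose_zero_right, show Nat.choose 2 1 = 2 from rfl]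
    push_cast
    ring
  have h3 : d (n+2) n = ((2:ℚ)^(2*n+4))⁻¹ *
      (2^n * 6 * e + 2^(n+1) * 2 * b * (n+1) + 2^(n+2) * a * (Nat.choose (n+2) n : ℚ)) := by
    rw [d, hq, show (n+2) = (n+1)+1 by ring, Finset.sum_Icc_succ_top (by omega),
      Finset.sum_Icc_succ_top (by omega), Finset.Icc_self, Finset.sum_singleton]
    have c1 : Nat.choose (n+1) n = n+1 := by
      have := Nat.choose_symm (show n ≤ n+1 by omega)
      rw [show n+1-n = 1 by omega, Nat.choose_one_right] at this
      exact this.symm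
    rw [show 2*(n+1+1)-2*n = 4 by omega, show (n+1+1)-n = 2 by omega,
      show 2*(n+1+1)-2*(n+1) = 2 by omega, show (n+1+1)-(n+1) = 1 by omega,
      show 2*(n+1+1)-2*(n+1+1) = 0 by omega, show (n+1+1)-(n+1+1) = 0 by omega,
      show (n+1+1)+n = 2*n+2 by ring, show (n+1+1)+(n+1) = 2*n+3 by ring,
      show (n+1+1)+(n+1+1) = 2*n+4 by ring, show (n+1)+1 = n+2 by ring,
      c1]
    simp only [Nat.choose_self, Nat.choose_zero_right, show Nat.choose 2 1 = 2 from rfl,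
      show Nat.choose 4 2 = 6 from rfl]
    push_cast
    ring
  -- binomial relations
  have fb : a = 2 * b := by
    have h1' : Nat.choose (2*n+4) (n+2) = Nat.choose (2*n+3) (n+1) + Nat.choose (2*n+3) (n+2) := by
      rw [show 2*n+4 = (2*n+3)+1 by ring, show n+2 = (n+1)+1 by ring, Nat.choose_succ_succ]
    have h2' : Nat.choose (2*n+3) (n+2) = Nat.choose (2*n+3) (n+1) := by
      have := Nat.choose_symm (show n+2 ≤ 2*n+3 by omega)
      rw [show 2*n+3-(n+2) = n+1 by omega] at this
      exact this.symm
    rw [ha, hb]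
    exact_mod_cast h1'.trans (by rw [h2']; ring)
  have fe : ((n:ℚ)+1) * b = (2*(n:ℚ)+3) * e := by
    have h5 : (2*n+3) * Nat.choose (2*n+2) n = Nat.choose (2*n+3) (n+1) * (n+1) := by
      have := Nat.add_one_mul_choose_eq (2*n+2) n
      simpa [Nat.succ_eq_add_one, show 2*n+2+1 = 2*n+3 by ring] using this
    have h6 := congrArg (Nat.cast : ℕ → ℚ) h5
    push_cast at h6
    rw [hb, he]
    linarith [h6]
  have fc : (Nat.choose (n+2) n : ℚ) = ((n:ℚ)+2)*((n:ℚ)+1)/2 := by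
    have h0 : Nat.choose (n+2) n = Nat.choose (n+2) 2 := by
      have := Nat.choose_symm (show 2 ≤ n+2 by omega)
      rw [show n+2-2 = n by omega] at this
      exact this
    have h4 := Nat.add_one_mul_choose_eq (n+1) 1
    simp only [Nat.succ_eq_add_one, Nat.choose_one_right] at h4
    rw [h0]
    have : ((n:ℚ)+1+1) * ((n:ℚ)+1) = (Nat.choose (n+1+1) 2 : ℚ) * 2 := by exact_mod_cast congrArg (Nat.cast : ℕ → ℚ) h4
    rw [show n+1+1 = n+2 by ring] at this
    rw [eq_div_iff (by norm_num), ← this]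
    ring
  have hbv : b = a / 2 := by rw [fb]; ring
  have hev : e = ((n:ℚ)+1) * a / (2*(2*(n:ℚ)+3)) := by
    rw [hbv] at fe
    field_simp at fe ⊢
    linarith [fe]
  -- rewrite goal
  rw [show (n+2)-1 = n+1 by omega, show (n+2)-2 = n by omega, show 2*(n+2) = 2*n+4 by ring, hq,
    h1, h2, h3, hbv, hev, fc, ← ha]
  clear_value a b e
  clear h1 h2 h3 hbv hev fc fb fe hb he hq
  have hA : (0:ℚ) < a := by
    rw [ha]
    exact_mod_cast Nat.choose_pos (show n+2 ≤ 2*n+4 by omega)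
  have hn : (0:ℚ) ≤ (n:ℚ) := Nat.cast_nonneg n
  have h23 : (2*(n:ℚ)+3) ≠ 0 := by positivity
  have h2p : ((2:ℚ)^(2*n+4)) ≠ 0 := by positivity
  have hY : (0:ℚ) < 4*(2*((n:ℚ)+2)-1) := by nlinarith [hn]
  have hAB : ((n+2:ℕ):ℚ)*(((n+2:ℕ):ℚ)-1) *
        ((((2:ℚ)^(2*n+4))⁻¹ * (2^(n+1) * 2 * (a/2) + 2^(n+2) * a * ((n:ℚ)+2)))^2 -
          ((2:ℚ)^(2*n+4))⁻¹ * 2^(n+2) * a *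
            (((2:ℚ)^(2*n+4))⁻¹ * (2^n * 6 * (((n:ℚ)+1) * a / (2*(2*(n:ℚ)+3)))
              + 2^(n+1) * 2 * (a/2) * ((n:ℚ)+1) + 2^(n+2) * a * (((n:ℚ)+2)*((n:ℚ)+1)/2))))
      = (((n+2:ℕ):ℚ)*(4*((n+2:ℕ):ℚ)^2+6*((n+2:ℕ):ℚ)-1)/(4*(2*((n+2:ℕ):ℚ)-1)))
        * (((n+2:ℕ):ℚ)*(((n+2:ℕ):ℚ)-1)) * ((2:ℚ)^(2*n+4))⁻¹ * a^2 := by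
    push_cast
    rw [div_mul_eq_mul_div, div_mul_eq_mul_div, div_mul_eq_mul_div,
      eq_div_iff (ne_of_gt hY)]
    field_simp
    ring
  refine ⟨hAB, ?_, ?_⟩
  · rw [gt_iff_lt, hAB]
    push_cast
    rw [div_mul_eq_mul_div, div_mul_eq_mul_div, div_mul_eq_mul_div, lt_div_iff₀ hY]
    have key : ((n:ℚ)+2)*(((n:ℚ)+2)+1)*(4*(2*((n:ℚ)+2)-1))
        < ((n:ℚ)+2)*(4*((n:ℚ)+2)^2+6*((n:ℚ)+2)-1)*(((n:ℚ)+2)*(((n:ℚ)+2)-1)) := by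
      nlinarith [hn, mul_nonneg hn hn, mul_nonneg (mul_nonneg hn hn) hn,
        mul_nonneg (mul_nonneg (mul_nonneg hn hn) hn) hn]
    have hpa : (0:ℚ) < ((2:ℚ)^(2*n+4))⁻¹ * a^2 := by positivity
    calc ((n:ℚ)+2)*(((n:ℚ)+2)+1) * ((2:ℚ)^(2*n+4))⁻¹ * a^2 * (4*(2*((n:ℚ)+2)-1))
        = (((n:ℚ)+2)*(((n:ℚ)+2)+1)*(4*(2*((n:ℚ)+2)-1))) * (((2:ℚ)^(2*n+4))⁻¹ * a^2) := by ring
      _ < (((n:ℚ)+2)*(4*((n:ℚ)+2)^2+6*((n:ℚ)+2)-1)*(((n:ℚ)+2)*(((n:ℚ)+2)-1)))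
            * (((2:ℚ)^(2*n+4))⁻¹ * a^2) := mul_lt_mul_of_pos_right key hpa
      _ = ((n:ℚ)+2)*(4*((n:ℚ)+2)^2+6*((n:ℚ)+2)-1)*(((n:ℚ)+2)*(((n:ℚ)+2)-1))
            * ((2:ℚ)^(2*n+4))⁻¹ * a^2 := by ring
  · push_cast
    field_simp
    ring
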